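/- Let G be a finite simple graph on n vertices with maximum degree Δ ≥ 2. Then n ≤ cdim(G) + Δ^{cdim(G)}, and consequently log_Δ((n+1)/2) ≤ cdim(G). -/

import Mathlib

open SimpleGraph

namespace ConnDim

open Classical in
/-- The local connectivity `κ(a,b)`: the maximum number of internally vertex-disjoint
`a`-`b` paths, with `κ(a,a) = ∞`. -/
noncomputable def localConn {V : Type*} (G : SimpleGraph V) (a b : V) : ℕ∞ :=
  if a = b then ⊤
  else sSup {n : ℕ∞ | ∃ Ps : Finset (G.Path a b),
    (∀ p ∈ Ps, ∀ q ∈ Ps, p ≠ q → ∀ x : V,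
        x ∈ p.1.support → x ∈ q.1.support → x = a ∨ x = b) ∧
    (Ps.card : ℕ∞) = n}

/-- A set `W` is connectivity resolving if vertices are determined by their
local connectivities to the elements of `W`. -/
def ConnResolving {V : Type*} (G : SimpleGraph V) (W : Set V) : Prop :=
  ∀ u v : V, (∀ w ∈ W, localConn G u w = localConn G v w) → u = v

/-- The connectivity dimension: minimum cardinality of a connectivity resolving set. -/
noncomputable def cdim {V : Type*} (G : SimpleGraph V) : ℕ :=
  sInf {n : ℕ | ∃ W : Set V, ConnResolving G W ∧ W.ncard = n}

/-- A set `W` is metric resolving if vertices are determined by their distances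
to the elements of `W`. -/
def MetricResolving {V : Type*} (G : SimpleGraph V) (W : Set V) : Prop :=
  ∀ u v : V, (∀ w ∈ W, G.dist u w = G.dist v w) → u = v

/-- The metric dimension: minimum cardinality of a metric resolving set. -/
noncomputable def mdim {V : Type*} (G : SimpleGraph V) : ℕ :=
  sInf {n : ℕ | ∃ W : Set V, MetricResolving G W ∧ W.ncard = n}

/-- `G` forces a `𝟙` representation if every minimum resolving set (basis) `B` admits a
vertex whose local connectivity to every element of `B` equals `1`. -/
def ForcesOne {V : Type*} (G : SimpleGraph V) : Prop :=
  ∀ B : Set V, ConnResolving G B → B.ncard = cdim G →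
    ∃ v : V, ∀ b ∈ B, localConn G v b = 1

/-- A cut vertex of a connected graph: its removal disconnects the graph. -/
def IsCutVertex {V : Type*} (G : SimpleGraph V) (v : V) : Prop :=
  G.Connected ∧ ¬ (G.induce {u : V | u ≠ v}).Connected

/-- A block of `G`: a maximal connected subgraph of `G` without a cut vertex of itself. -/
def IsBlock {V : Type*} (G : SimpleGraph V) (H : G.Subgraph) : Prop :=
  H.coe.Connected ∧ (∀ v, ¬ IsCutVertex H.coe v) ∧
  ∀ H' : G.Subgraph, H ≤ H' → H'.coe.Connected → (∀ v, ¬ IsCutVertex H'.coe v) → H' = H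

/-- The number of blocks of `G`. -/
noncomputable def numBlocks {V : Type*} (G : SimpleGraph V) : ℕ :=
  Nat.card {H : G.Subgraph // IsBlock G H}

/-- Two vertices are twins if they have the same neighborhood in the graph with
both of them deleted. -/
def AreTwins {V : Type*} (G : SimpleGraph V) (a b : V) : Prop :=
  ∀ x : V, x ≠ a → x ≠ b → (G.Adj a x ↔ G.Adj b x)

/-- The threshold graph generated by a binary sequence `L` (`false` = isolated vertex,
`true` = dominating vertex): two vertices are adjacent iff the later one was added
as a dominating vertex. -/
def thresholdGraph (L : List Bool) : SimpleGraph (Fin L.length) :=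
  SimpleGraph.fromRel (fun i j => i < j ∧ L.get j = true)

/-- The alternating binary sequence `0,1,0,1,…,0,1` of length `2 * n`. -/
def altList (n : ℕ) : List Bool := (List.replicate n [false, true]).flatten

/-- The join of two graphs on disjoint vertex sets by the bridge `v₁v₂`. -/
def bridgeJoin {V₁ V₂ : Type*} (G₁ : SimpleGraph V₁) (G₂ : SimpleGraph V₂)
    (v₁ : V₁) (v₂ : V₂) : SimpleGraph (V₁ ⊕ V₂) :=
  G₁.map Function.Embedding.inl ⊔ G₂.map Function.Embedding.inr
    ⊔ SimpleGraph.fromEdgeSet {s(Sum.inl v₁, Sum.inr v₂)}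

/-- The graph obtained from `G` by attaching a new leaf (the vertex `none`) to `u`. -/
def attachLeaf {V : Type*} (G : SimpleGraph V) (u : V) : SimpleGraph (Option V) :=
  G.map Function.Embedding.some ⊔ SimpleGraph.fromEdgeSet {s(some u, (none : Option V))}

/-- The chain of `t` triangles (triangle `i` has vertices `inl i.castSucc`, `inl i.succ`,
`inr (inl i)`), with a leaf `inr (inr ())` attached to the end vertex `inl 0`. -/
def triChain (t : ℕ) : SimpleGraph (Fin (t+1) ⊕ Fin t ⊕ Unit) :=
  SimpleGraph.fromRel (fun a b =>
    match a, b with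
    | Sum.inl i, Sum.inl j => (i : ℕ) + 1 = (j : ℕ)
    | Sum.inr (Sum.inl i), Sum.inl j => j = Fin.castSucc i ∨ j = Fin.succ i
    | Sum.inr (Sum.inr _), Sum.inl j => j = 0
    | _, _ => False)

/-! ### Auxiliary development for stmt3 -/

section Aux

variable {V : Type*} [Fintype V] {G : SimpleGraph V} {a b c : V}

/-- The defining set of cardinalities of internally disjoint path families. -/
def famSet (G : SimpleGraph V) (a b : V) : Set ℕ∞ :=
  {n : ℕ∞ | ∃ Ps : Finset (G.Path a b),
    (∀ p ∈ Ps, ∀ q ∈ Ps, p ≠ q → ∀ x : V,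
        x ∈ p.1.support → x ∈ q.1.support → x = a ∨ x = b) ∧
    (Ps.card : ℕ∞) = n}

lemma localConn_self (G : SimpleGraph V) (a : V) : localConn G a a = ⊤ := by
  unfold localConn
  simp

lemma localConn_eq_sSup (G : SimpleGraph V) (hab : a ≠ b) :
    localConn G a b = sSup (famSet G a b) := by
  unfold localConn famSet
  rw [if_neg hab]

lemma famSet_finite (G : SimpleGraph V) (a b : V) : (famSet G a b).Finite := by
  classical
  have : famSet G a b ⊆ (fun Ps : Finset (G.Path a b) => ((Ps.card : ℕ∞))) '' Set.univ := by
    rintro n ⟨Ps, _, rfl⟩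
    exact ⟨Ps, trivial, rfl⟩
  exact Set.Finite.subset (Set.Finite.image _ (Set.finite_univ)) this

lemma zero_mem_famSet (G : SimpleGraph V) (a b : V) : (0 : ℕ∞) ∈ famSet G a b :=
  ⟨∅, by simp, by simp⟩

lemma localConn_mem_famSet (G : SimpleGraph V) (hab : a ≠ b) :
    localConn G a b ∈ famSet G a b := by
  rw [localConn_eq_sSup G hab]
  exact Set.Nonempty.csSup_mem ⟨0, zero_mem_famSet G a b⟩ (famSet_finite G a b)

lemma localConn_ne_top (G : SimpleGraph V) (hab : a ≠ b) : localConn G a b ≠ ⊤ := by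
  obtain ⟨Ps, _, hcard⟩ := localConn_mem_famSet G hab
  rw [← hcard]
  exact ENat.coe_ne_top _

lemma le_localConn_of_family (G : SimpleGraph V) (hab : a ≠ b) (Ps : Finset (G.Path a b))
    (hPs : ∀ p ∈ Ps, ∀ q ∈ Ps, p ≠ q → ∀ x : V,
        x ∈ p.1.support → x ∈ q.1.support → x = a ∨ x = b) :
    (Ps.card : ℕ∞) ≤ localConn G a b := by
  rw [localConn_eq_sSup G hab]
  exact le_sSup ⟨Ps, hPs, rfl⟩

lemma localConn_symm (G : SimpleGraph V) (a b : V) : localConn G a b = localConn G b a := by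
  classical
  by_cases hab : a = b
  · subst hab; rfl
  have key : ∀ u v : V, u ≠ v → localConn G u v ≤ localConn G v u := by
    intro u v huv
    rw [localConn_eq_sSup G huv]
    refine sSup_le ?_
    rintro n ⟨Ps, hPs, rfl⟩
    have hinj : Function.Injective (fun p : G.Path u v => p.reverse) := by
      intro p q h
      have h' : (p : G.Walk u v).reverse = (q : G.Walk u v).reverse := congrArg Subtype.val h
      exact Subtype.ext (SimpleGraph.Walk.reverse_injective h')
    have hcard : (Ps.image (fun p => p.reverse)).card = Ps.card :=
      Finset.card_image_of_injective _ hinj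
    rw [← hcard]
    refine le_localConn_of_family G (Ne.symm huv) _ ?_
    intro p hp q hq hpq x hxp hxq
    simp only [Finset.mem_image] at hp hq
    obtain ⟨p0, hp0, rfl⟩ := hp
    obtain ⟨q0, hq0, rfl⟩ := hq
    have hne : p0 ≠ q0 := fun h => hpq (by rw [h])
    have hxp0 : x ∈ p0.1.support := by
      have : (p0.reverse : G.Walk v u).support = p0.1.support.reverse :=
        SimpleGraph.Walk.support_reverse _
      rw [show ((p0.reverse : G.Path v u) : G.Walk v u) = (p0 : G.Walk u v).reverse from rfl,
        SimpleGraph.Walk.support_reverse, List.mem_reverse] at hxp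
      exact hxp
    have hxq0 : x ∈ q0.1.support := by
      rw [show ((q0.reverse : G.Path v u) : G.Walk v u) = (q0 : G.Walk u v).reverse from rfl,
        SimpleGraph.Walk.support_reverse, List.mem_reverse] at hxq
      exact hxq
    exact (hPs p0 hp0 q0 hq0 hne x hxp0 hxq0).symm
  exact le_antisymm (key a b hab) (key b a (Ne.symm hab))

lemma localConn_eq_zero_of_not_reachable (G : SimpleGraph V) (h : ¬ G.Reachable a b) :
    localConn G a b = 0 := by
  have hab : a ≠ b := by rintro rfl; exact h (SimpleGraph.Reachable.refl a)
  rw [localConn_eq_sSup G hab]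
  refine le_antisymm (sSup_le ?_) zero_le
  rintro n ⟨Ps, _, rfl⟩
  have : Ps = ∅ := by
    rcases Finset.eq_empty_or_nonempty Ps with h' | ⟨p, hp⟩
    · exact h'
    · exact absurd ⟨p.1⟩ h
  simp [this]

lemma one_le_localConn_of_reachable (G : SimpleGraph V) (h : G.Reachable a b) (hab : a ≠ b) :
    1 ≤ localConn G a b := by
  classical
  obtain ⟨w⟩ := h
  have := le_localConn_of_family G hab {w.toPath} (by
    intro p hp q hq hpq x _ _
    simp only [Finset.mem_singleton] at hp hq
    exact absurd (hp.trans hq.symm) hpq)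
  simpa using this

lemma reachable_of_one_le_localConn (G : SimpleGraph V) (hab : a ≠ b)
    (h : 1 ≤ localConn G a b) : G.Reachable a b := by
  obtain ⟨Ps, _, hcard⟩ := localConn_mem_famSet G hab
  rw [← hcard] at h
  have : 1 ≤ Ps.card := by exact_mod_cast h
  obtain ⟨p, _⟩ := Finset.card_pos.mp this
  exact ⟨p.1⟩

lemma path_eq_edge {p : G.Walk a b} (hp : p.IsPath) (hab : a ≠ b) (h1 : p.getVert 1 = b) :
    ∃ h : G.Adj a b, p = SimpleGraph.Walk.cons h SimpleGraph.Walk.nil := by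
  cases p with
  | nil => exact absurd rfl hab
  | @cons _ u _ h q =>
    have hu : u = b := by simpa [SimpleGraph.Walk.getVert_cons_succ,
      SimpleGraph.Walk.getVert_zero] using h1
    subst hu
    have hq : q.IsPath := hp.of_cons
    have : q = SimpleGraph.Walk.nil := SimpleGraph.Walk.isPath_iff_eq_nil.mp hq
    exact ⟨h, by rw [this]⟩

lemma localConn_le_degree (G : SimpleGraph V) [DecidableRel G.Adj] (hab : a ≠ b) :
    localConn G a b ≤ (G.degree a : ℕ∞) := by
  classical
  rw [localConn_eq_sSup G hab]
  refine sSup_le ?_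
  rintro n ⟨Ps, hPs, rfl⟩
  have hcard : Ps.card ≤ G.degree a := by
    rw [← G.card_neighborFinset_eq_degree a]
    refine Finset.card_le_card_of_injOn (fun p => p.1.getVert 1) ?_ ?_
    · intro p _
      rw [Finset.mem_coe, SimpleGraph.mem_neighborFinset]
      exact SimpleGraph.Walk.adj_snd (SimpleGraph.Walk.not_nil_of_ne hab)
    · intro p hp q hq heq0
      have heq : p.1.getVert 1 = q.1.getVert 1 := heq0
      by_contra hne
      have hlp : 0 < p.1.length := SimpleGraph.Walk.not_nil_iff_lt_length.mp
        (SimpleGraph.Walk.not_nil_of_ne (p := p.1) hab)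
      have hlq : 0 < q.1.length := SimpleGraph.Walk.not_nil_iff_lt_length.mp
        (SimpleGraph.Walk.not_nil_of_ne (p := q.1) hab)
      have hxp : p.1.getVert 1 ∈ p.1.support :=
        SimpleGraph.Walk.mem_support_iff_exists_getVert.mpr ⟨1, rfl, by omega⟩
      have hxq : p.1.getVert 1 ∈ q.1.support := by
        rw [heq]
        exact SimpleGraph.Walk.mem_support_iff_exists_getVert.mpr ⟨1, rfl, by omega⟩
      rcases hPs p hp q hq hne _ hxp hxq with hxa | hxb
      · have hadj : G.Adj a (p.1.getVert 1) := SimpleGraph.Walk.adj_snd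
          (SimpleGraph.Walk.not_nil_of_ne (p := p.1) hab)
        rw [hxa] at hadj
        exact G.irrefl hadj
      · have hq1 : q.1.getVert 1 = b := by rw [← heq]; exact hxb
        obtain ⟨h1, he1⟩ := path_eq_edge p.2 hab hxb
        obtain ⟨h2, he2⟩ := path_eq_edge q.2 hab hq1
        exact hne (Subtype.ext (he1.trans he2.symm))
  exact_mod_cast hcard

section Surgery

set_option linter.unusedSectionVars false

open SimpleGraph.Walk

lemma mem_reverse_support (W : G.Walk a b) (x : V) :
    x ∈ W.reverse.support ↔ x ∈ W.support := by
  rw [SimpleGraph.Walk.support_reverse, List.mem_reverse]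

lemma two_le_localConn_of_pair (hac : a ≠ c) (p q : G.Path a c) (hne : p ≠ q)
    (hint : ∀ x, x ∈ p.1.support → x ∈ q.1.support → x = a ∨ x = c) :
    2 ≤ localConn G a c := by
  classical
  have hcond : ∀ p' ∈ ({p, q} : Finset (G.Path a c)), ∀ q' ∈ ({p, q} : Finset (G.Path a c)),
      p' ≠ q' → ∀ x : V, x ∈ p'.1.support → x ∈ q'.1.support → x = a ∨ x = c := by
    intro p' hp' q' hq' hne' x hxp hxq
    simp only [Finset.mem_insert, Finset.mem_singleton] at hp' hq'
    rcases hp' with rfl | rfl <;> rcases hq' with rfl | rfl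
    · exact absurd rfl hne'
    · exact hint x hxp hxq
    · exact hint x hxq hxp
    · exact absurd rfl hne'
  have := le_localConn_of_family G hac {p, q} hcond
  rwa [Finset.card_pair hne, Nat.cast_ofNat] at this

lemma support_length_le_two (p : G.Walk a c) (hp : p.IsPath)
    (hsub : ∀ x ∈ p.support, x = a ∨ x = c) : p.length ≤ 1 := by
  classical
  have h1 : p.support.toFinset ⊆ {a, c} := by
    intro x hx
    rcases hsub x (List.mem_toFinset.mp hx) with rfl | rfl <;> simp
  have h2 : p.support.toFinset.card = p.support.length :=
    List.toFinset_card_of_nodup hp.support_nodup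
  have h3 : p.support.toFinset.card ≤ 2 :=
    le_trans (Finset.card_le_card h1) (by
      exact le_trans (Finset.card_insert_le _ _) (by simp))
  rw [h2, SimpleGraph.Walk.length_support] at h3
  omega

lemma two_le_localConn_of_walks (hac : a ≠ c) (W1 W2 : G.Walk a c)
    (hint : ∀ x, x ∈ W1.support → x ∈ W2.support → x = a ∨ x = c)
    (hedge : s(a, c) ∉ W2.edges) :
    2 ≤ localConn G a c := by
  classical
  set p := W1.toPath with hp
  set q := W2.toPath with hq
  have hps : ∀ x ∈ p.1.support, x ∈ W1.support := fun x hx => support_bypass_subset _ hx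
  have hqs : ∀ x ∈ q.1.support, x ∈ W2.support := fun x hx => support_bypass_subset _ hx
  have hne : p ≠ q := by
    intro h
    have hsub : ∀ x ∈ p.1.support, x = a ∨ x = c := by
      intro x hx
      exact hint x (hps x hx) (hqs x (h ▸ hx))
    have hlen : p.1.length ≤ 1 := support_length_le_two p.1 p.2 hsub
    have hpos : 0 < p.1.length :=
      SimpleGraph.Walk.not_nil_iff_lt_length.mp (SimpleGraph.Walk.not_nil_of_ne hac)
    have hlen1 : p.1.length = 1 := by omega
    have h1 : p.1.getVert 1 = c := by
      rw [← hlen1]; exact SimpleGraph.Walk.getVert_length _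
    obtain ⟨hadj, hedge1⟩ := path_eq_edge p.2 hac h1
    have : s(a, c) ∈ q.1.edges := by
      rw [← h, hedge1]; simp
    exact hedge (edges_bypass_subset _ this)
  exact two_le_localConn_of_pair hac p q hne
    (fun x hxp hxq => hint x (hps x hxp) (hqs x hxq))

/-- First hit of a set `T` along a walk whose end lies in `T`. -/
lemma exists_firstHit {u v : V} (W : G.Walk u v) (T : Set V) (hv : v ∈ T) :
    ∃ x, x ∈ T ∧ ∃ W' : G.Walk u x, (∀ y ∈ W'.support, y ∈ W.support) ∧
      (∀ y ∈ W'.support, y ∈ T → y = x) := by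
  induction W with
  | nil =>
    exact ⟨_, hv, SimpleGraph.Walk.nil, fun y hy => hy, fun y hy _ => by simpa using hy⟩
  | @cons uu u1 vv h W0 ih =>
    by_cases huu : uu ∈ T
    · refine ⟨uu, huu, SimpleGraph.Walk.nil, fun y hy => ?_, fun y hy _ => by simpa using hy⟩
      have : y = uu := by simpa using hy
      subst this
      exact SimpleGraph.Walk.start_mem_support _
    · obtain ⟨x, hxT, W', hsub, hfirst⟩ := ih hv
      refine ⟨x, hxT, SimpleGraph.Walk.cons h W', ?_, ?_⟩
      · intro y hy
        rw [SimpleGraph.Walk.support_cons, List.mem_cons] at hy ⊢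
        rcases hy with rfl | hy
        · exact Or.inl rfl
        · exact Or.inr (hsub y hy)
      · intro y hy hyT
        rw [SimpleGraph.Walk.support_cons, List.mem_cons] at hy
        rcases hy with rfl | hy
        · exact absurd hyT huu
        · exact hfirst y hy hyT

lemma getVert_one_append {p : G.Walk a b} (q : G.Walk b c) (hp : 0 < p.length) :
    (p.append q).getVert 1 = p.getVert 1 := by
  rw [SimpleGraph.Walk.getVert_append]
  split
  · rfl
  · rename_i h
    have h1 : p.length = 1 := by omega
    have : q.getVert (1 - p.length) = b := by rw [h1]; simp
    rw [this, ← h1]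
    exact (SimpleGraph.Walk.getVert_length p).symm

lemma edge_not_mem_of_walk (W : G.Walk a c) (h1 : a ∉ W.support.tail)
    (h2 : W.getVert 1 ≠ c) : s(a, c) ∉ W.edges := by
  cases W with
  | nil => simp
  | @cons _ u _ h W0 =>
    intro hmem
    rw [SimpleGraph.Walk.edges_cons, List.mem_cons] at hmem
    rcases hmem with heq | hmem
    · rw [Sym2.eq_iff] at heq
      rcases heq with ⟨-, rfl⟩ | ⟨rfl, rfl⟩
      · exact h2 (by simp [SimpleGraph.Walk.getVert_cons_succ])
      · exact h1 (by
          rw [SimpleGraph.Walk.support_cons]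
          simpa using W0.start_mem_support)
    · have : a ∈ W0.support := SimpleGraph.Walk.fst_mem_support_of_mem_edges W0 hmem
      exact h1 (by rw [SimpleGraph.Walk.support_cons]; simpa using this)

lemma start_not_mem_tail_support {W : G.Walk a b} (hW : W.IsPath) : a ∉ W.support.tail := by
  have h := hW.support_nodup
  rw [SimpleGraph.Walk.support_eq_cons] at h
  exact (List.nodup_cons.mp h).1

lemma edge_not_mem_append {m : V} (W1 : G.Walk a m) (W2 : G.Walk m c)
    (hl : 0 < W1.length) (h1 : W1.getVert 1 ≠ c)
    (ha : a ∉ W1.support.tail) (ha2 : a ∉ W2.support) :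
    s(a, c) ∉ (W1.append W2).edges := by
  apply edge_not_mem_of_walk
  · rw [SimpleGraph.Walk.support_append,
      List.tail_append_of_ne_nil (SimpleGraph.Walk.support_ne_nil _)]
    intro hmem
    rcases List.mem_append.mp hmem with h | h
    · exact ha h
    · exact ha2 (List.tail_subset _ h)
  · rw [getVert_one_append _ hl]
    exact h1

lemma takeUntil_inter [DecidableEq V] {x : V} (P : G.Walk a b) (hP : P.IsPath) (hx : x ∈ P.support) :
    ∀ y, y ∈ (P.takeUntil x hx).support → y ∈ (P.dropUntil x hx).support → y = x := by
  intro y h1 h2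
  have hnodup : ((P.takeUntil x hx).support ++ (P.dropUntil x hx).support.tail).Nodup := by
    rw [← SimpleGraph.Walk.support_append, SimpleGraph.Walk.take_spec]
    exact hP.support_nodup
  have hdisj := List.disjoint_of_nodup_append hnodup
  rw [SimpleGraph.Walk.support_eq_cons (P.dropUntil x hx), List.mem_cons] at h2
  rcases h2 with rfl | h2
  · rfl
  · exact absurd (hdisj h1 h2) (fun h => h)

lemma end_not_mem_takeUntil [DecidableEq V] {x : V} (P : G.Walk a b) (hP : P.IsPath) (hx : x ∈ P.support)
    (hxb : x ≠ b) : b ∉ (P.takeUntil x hx).support := by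
  intro h
  exact hxb (takeUntil_inter P hP hx b h (SimpleGraph.Walk.end_mem_support _)).symm

lemma start_not_mem_dropUntil [DecidableEq V] {x : V} (P : G.Walk a b) (hP : P.IsPath) (hx : x ∈ P.support)
    (hxa : x ≠ a) : a ∉ (P.dropUntil x hx).support := by
  intro h
  exact hxa (takeUntil_inter P hP hx a (SimpleGraph.Walk.start_mem_support _) h).symm

lemma dropUntil_cons_of_ne [DecidableEq V] {u x : V} (r : G.Adj a u) (p : G.Walk u b)
    (hx : x ∈ (SimpleGraph.Walk.cons r p).support) (hxa : a ≠ x)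
    (hx' : x ∈ p.support) :
    (SimpleGraph.Walk.cons r p).dropUntil x hx = p.dropUntil x hx' := by
  simp only [SimpleGraph.Walk.dropUntil]
  rw [dif_neg hxa]

lemma dropUntil_start [DecidableEq V] (P : G.Walk a b) (hP : P.IsPath) (hx : a ∈ P.support) :
    P.dropUntil a hx = P := by
  have ht : P.takeUntil a hx = SimpleGraph.Walk.nil :=
    SimpleGraph.Walk.isPath_iff_eq_nil.mp (hP.takeUntil hx)
  have := SimpleGraph.Walk.take_spec P hx
  rw [ht] at this
  simpa using this

lemma mem_dropUntil_or [DecidableEq V] {x1 x2 : V} (P : G.Walk a b) (hP : P.IsPath)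
    (h1 : x1 ∈ P.support) (h2 : x2 ∈ P.support) :
    x2 ∈ (P.dropUntil x1 h1).support ∨ x1 ∈ (P.dropUntil x2 h2).support := by
  induction P with
  | nil =>
    have e1 := SimpleGraph.Walk.mem_support_nil_iff.mp h1
    have e2 := SimpleGraph.Walk.mem_support_nil_iff.mp h2
    subst e1
    subst e2
    left
    exact SimpleGraph.Walk.start_mem_support _
  | @cons u u1 vv r p ih =>
    by_cases hx1 : x1 = u
    · subst hx1
      left
      rw [dropUntil_start _ hP h1]
      exact h2
    by_cases hx2 : x2 = u
    · subst hx2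
      right
      rw [dropUntil_start _ hP h2]
      exact h1
    have h1' : x1 ∈ p.support := by
      have h := h1
      rw [SimpleGraph.Walk.support_cons, List.mem_cons] at h
      exact h.resolve_left hx1
    have h2' : x2 ∈ p.support := by
      have h := h2
      rw [SimpleGraph.Walk.support_cons, List.mem_cons] at h
      exact h.resolve_left hx2
    rw [dropUntil_cons_of_ne r p h1 (fun h => hx1 h.symm) h1',
      dropUntil_cons_of_ne r p h2 (fun h => hx2 h.symm) h2']
    exact ih hP.of_cons h1' h2'

section MasterLemma

variable [DecidableEq V]

/-- Case: the first hit of the first walk is `a` itself. -/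
lemma master_auxA {S : Finset (G.Path a b)}
    (hdisj : ∀ p ∈ S, ∀ q ∈ S, p ≠ q → ∀ x : V,
      x ∈ p.1.support → x ∈ q.1.support → x = a ∨ x = b)
    (hab : a ≠ b) (hac : a ≠ c)
    (hcT : ¬ ∃ p ∈ S, c ∈ p.1.support)
    {x2 : V} (hx2a : x2 ≠ a)
    {Pj : G.Path a b} (hPjS : Pj ∈ S) (hx2Pj : x2 ∈ Pj.1.support)
    (W1' : G.Walk c a) (W2' : G.Walk c x2)
    (hfirst1 : ∀ y ∈ W1'.support, (∃ p ∈ S, y ∈ p.1.support) → y = a)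
    (hfirst2 : ∀ y ∈ W2'.support, (∃ p ∈ S, y ∈ p.1.support) → y = x2)
    (hW12 : ∀ y, y ∈ W1'.support → y ∈ W2'.support → y = b ∨ y = c) :
    2 ≤ localConn G a c := by
  classical
  set tB := Pj.1.takeUntil x2 hx2Pj with htBdef
  have htBpath : tB.IsPath := Pj.2.takeUntil hx2Pj
  have htBT : ∀ y ∈ tB.support, ∃ p ∈ S, y ∈ p.1.support :=
    fun y hy => ⟨Pj, hPjS, SimpleGraph.Walk.support_takeUntil_subset _ _ hy⟩
  have hl : 0 < tB.length :=
    SimpleGraph.Walk.not_nil_iff_lt_length.mp (SimpleGraph.Walk.not_nil_of_ne (Ne.symm hx2a))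
  refine two_le_localConn_of_walks hac W1'.reverse (tB.append W2'.reverse) ?_ ?_
  · intro x hxA hxB
    rw [mem_reverse_support] at hxA
    rcases (SimpleGraph.Walk.mem_support_append_iff _ _).mp hxB with hxt | hxw2
    · exact Or.inl (hfirst1 x hxA (htBT x hxt))
    · rw [mem_reverse_support] at hxw2
      rcases hW12 x hxA hxw2 with rfl | rfl
      · exact absurd (hfirst1 x hxA ⟨Pj, hPjS, SimpleGraph.Walk.end_mem_support _⟩).symm hab
      · exact Or.inr rfl
  · refine edge_not_mem_append tB W2'.reverse hl ?_ ?_ ?_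
    · intro hgv
      apply hcT
      rw [← hgv]
      exact htBT _ (SimpleGraph.Walk.mem_support_iff_exists_getVert.mpr ⟨1, rfl, by omega⟩)
    · exact start_not_mem_tail_support htBpath
    · intro hmem
      rw [mem_reverse_support] at hmem
      exact hx2a (hfirst2 a hmem ⟨Pj, hPjS, SimpleGraph.Walk.start_mem_support _⟩).symm

/-- Case: the hits lie on two different paths of the family. -/
lemma master_auxB {S : Finset (G.Path a b)}
    (hdisj : ∀ p ∈ S, ∀ q ∈ S, p ≠ q → ∀ x : V,
      x ∈ p.1.support → x ∈ q.1.support → x = a ∨ x = b)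
    (hab : a ≠ b) (hac : a ≠ c)
    (hcT : ¬ ∃ p ∈ S, c ∈ p.1.support)
    {x1 x2 : V} (hx1a : x1 ≠ a) (hx2a : x2 ≠ a) (hx1b : x1 ≠ b) (hx2b : x2 ≠ b)
    {Pi Pj : G.Path a b} (hPiS : Pi ∈ S) (hPjS : Pj ∈ S) (hPij : Pi ≠ Pj)
    (hx1Pi : x1 ∈ Pi.1.support) (hx2Pj : x2 ∈ Pj.1.support)
    (W1' : G.Walk c x1) (W2' : G.Walk c x2)
    (hfirst1 : ∀ y ∈ W1'.support, (∃ p ∈ S, y ∈ p.1.support) → y = x1)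
    (hfirst2 : ∀ y ∈ W2'.support, (∃ p ∈ S, y ∈ p.1.support) → y = x2)
    (hW12 : ∀ y, y ∈ W1'.support → y ∈ W2'.support → y = b ∨ y = c) :
    2 ≤ localConn G a c := by
  classical
  set ti := Pi.1.takeUntil x1 hx1Pi with htidef
  set tj := Pj.1.takeUntil x2 hx2Pj with htjdef
  have htipath : ti.IsPath := Pi.2.takeUntil hx1Pi
  have htjpath : tj.IsPath := Pj.2.takeUntil hx2Pj
  have htiT : ∀ y ∈ ti.support, ∃ p ∈ S, y ∈ p.1.support :=
    fun y hy => ⟨Pi, hPiS, SimpleGraph.Walk.support_takeUntil_subset _ _ hy⟩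
  have htjT : ∀ y ∈ tj.support, ∃ p ∈ S, y ∈ p.1.support :=
    fun y hy => ⟨Pj, hPjS, SimpleGraph.Walk.support_takeUntil_subset _ _ hy⟩
  have hlj : 0 < tj.length :=
    SimpleGraph.Walk.not_nil_iff_lt_length.mp (SimpleGraph.Walk.not_nil_of_ne (Ne.symm hx2a))
  refine two_le_localConn_of_walks hac (ti.append W1'.reverse) (tj.append W2'.reverse) ?_ ?_
  · intro x hxA hxB
    rcases (SimpleGraph.Walk.mem_support_append_iff _ _).mp hxA with hxti | hxw1
    · rcases (SimpleGraph.Walk.mem_support_append_iff _ _).mp hxB with hxtj | hxw2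
      · have hxPi := SimpleGraph.Walk.support_takeUntil_subset _ _ hxti
        have hxPj := SimpleGraph.Walk.support_takeUntil_subset _ _ hxtj
        rcases hdisj Pi hPiS Pj hPjS hPij x hxPi hxPj with rfl | rfl
        · exact Or.inl rfl
        · exact absurd hxti (end_not_mem_takeUntil Pi.1 Pi.2 hx1Pi hx1b)
      · rw [mem_reverse_support] at hxw2
        have hx2eq := hfirst2 x hxw2 (htiT x hxti)
        subst hx2eq
        have hxPi := SimpleGraph.Walk.support_takeUntil_subset _ _ hxti
        rcases hdisj Pi hPiS Pj hPjS hPij x hxPi hx2Pj with rfl | rfl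
        · exact absurd rfl hx2a
        · exact absurd rfl hx2b
    · rw [mem_reverse_support] at hxw1
      rcases (SimpleGraph.Walk.mem_support_append_iff _ _).mp hxB with hxtj | hxw2
      · have hx1eq := hfirst1 x hxw1 (htjT x hxtj)
        subst hx1eq
        have hxPj := SimpleGraph.Walk.support_takeUntil_subset _ _ hxtj
        rcases hdisj Pi hPiS Pj hPjS hPij x hx1Pi hxPj with rfl | rfl
        · exact absurd rfl hx1a
        · exact absurd rfl hx1b
      · rw [mem_reverse_support] at hxw2
        rcases hW12 x hxw1 hxw2 with rfl | rfl
        · exact absurd (hfirst1 x hxw1 ⟨Pi, hPiS, SimpleGraph.Walk.end_mem_support _⟩) hx1b.symm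
        · exact Or.inr rfl
  · refine edge_not_mem_append tj W2'.reverse hlj ?_ ?_ ?_
    · intro hgv
      apply hcT
      rw [← hgv]
      exact htjT _ (SimpleGraph.Walk.mem_support_iff_exists_getVert.mpr ⟨1, rfl, by omega⟩)
    · exact start_not_mem_tail_support htjpath
    · intro hmem
      rw [mem_reverse_support] at hmem
      exact hx2a (hfirst2 a hmem ⟨Pj, hPjS, SimpleGraph.Walk.start_mem_support _⟩).symm

/-- Case: the hits lie on the same path of the family, `x2` after `x1`. -/
lemma master_auxC {S : Finset (G.Path a b)}
    (hdisj : ∀ p ∈ S, ∀ q ∈ S, p ≠ q → ∀ x : V,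
      x ∈ p.1.support → x ∈ q.1.support → x = a ∨ x = b)
    (hab : a ≠ b) (hac : a ≠ c)
    (hcT : ¬ ∃ p ∈ S, c ∈ p.1.support)
    {x1 x2 : V} (hx1a : x1 ≠ a) (hx2a : x2 ≠ a) (hx1b : x1 ≠ b) (hx2b : x2 ≠ b)
    (hx12 : x1 ≠ x2)
    {P Pl : G.Path a b} (hPS : P ∈ S) (hPlS : Pl ∈ S) (hPPl : P ≠ Pl)
    (hx1P : x1 ∈ P.1.support)
    (hord : x2 ∈ (P.1.dropUntil x1 hx1P).support)
    (W1' : G.Walk c x1) (W2' : G.Walk c x2)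
    (hfirst1 : ∀ y ∈ W1'.support, (∃ p ∈ S, y ∈ p.1.support) → y = x1)
    (hfirst2 : ∀ y ∈ W2'.support, (∃ p ∈ S, y ∈ p.1.support) → y = x2)
    (hW12 : ∀ y, y ∈ W1'.support → y ∈ W2'.support → y = b ∨ y = c) :
    2 ≤ localConn G a c := by
  classical
  set t1 := P.1.takeUntil x1 hx1P with ht1def
  set d1 := P.1.dropUntil x1 hx1P with hd1def
  have ht1path : t1.IsPath := P.2.takeUntil hx1P
  have hd1path : d1.IsPath := P.2.dropUntil hx1P
  set d12 := d1.dropUntil x2 hord with hd12def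
  have hx1d12 : x1 ∉ d12.support :=
    start_not_mem_dropUntil d1 hd1path hord hx12.symm
  have had1 : a ∉ d1.support := start_not_mem_dropUntil P.1 P.2 hx1P hx1a
  have ht1T : ∀ y ∈ t1.support, ∃ p ∈ S, y ∈ p.1.support :=
    fun y hy => ⟨P, hPS, SimpleGraph.Walk.support_takeUntil_subset _ _ hy⟩
  have hd12d1 : ∀ y ∈ d12.support, y ∈ d1.support :=
    fun y hy => SimpleGraph.Walk.support_dropUntil_subset _ _ hy
  have hd1T : ∀ y ∈ d1.support, ∃ p ∈ S, y ∈ p.1.support :=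
    fun y hy => ⟨P, hPS, SimpleGraph.Walk.support_dropUntil_subset _ _ hy⟩
  have hlPl : 0 < Pl.1.length :=
    SimpleGraph.Walk.not_nil_iff_lt_length.mp (SimpleGraph.Walk.not_nil_of_ne hab)
  refine two_le_localConn_of_walks hac (t1.append W1'.reverse)
    (Pl.1.append (d12.reverse.append W2'.reverse)) ?_ ?_
  · intro x hxA hxB
    have hxB' := (SimpleGraph.Walk.mem_support_append_iff _ _).mp hxB
    rcases (SimpleGraph.Walk.mem_support_append_iff _ _).mp hxA with hxt1 | hxw1
    · rcases hxB' with hxPl | hxrest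
      · have hxP := SimpleGraph.Walk.support_takeUntil_subset _ _ hxt1
        rcases hdisj P hPS Pl hPlS hPPl x hxP hxPl with rfl | rfl
        · exact Or.inl rfl
        · exact absurd hxt1 (end_not_mem_takeUntil P.1 P.2 hx1P hx1b)
      · rcases (SimpleGraph.Walk.mem_support_append_iff _ _).mp hxrest with hxd | hxw2
        · rw [mem_reverse_support] at hxd
          have := takeUntil_inter P.1 P.2 hx1P x hxt1 (hd12d1 x hxd)
          subst this
          exact absurd hxd hx1d12
        · rw [mem_reverse_support] at hxw2
          have := hfirst2 x hxw2 (ht1T x hxt1)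
          subst this
          have := takeUntil_inter P.1 P.2 hx1P x hxt1 hord
          exact absurd this hx12.symm
    · rw [mem_reverse_support] at hxw1
      rcases hxB' with hxPl | hxrest
      · have := hfirst1 x hxw1 ⟨Pl, hPlS, hxPl⟩
        subst this
        rcases hdisj P hPS Pl hPlS hPPl x hx1P hxPl with rfl | rfl
        · exact absurd rfl hx1a
        · exact absurd rfl hx1b
      · rcases (SimpleGraph.Walk.mem_support_append_iff _ _).mp hxrest with hxd | hxw2
        · rw [mem_reverse_support] at hxd
          have := hfirst1 x hxw1 (hd1T x (hd12d1 x hxd))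
          subst this
          exact absurd hxd hx1d12
        · rw [mem_reverse_support] at hxw2
          rcases hW12 x hxw1 hxw2 with rfl | rfl
          · exact absurd (hfirst1 x hxw1 ⟨P, hPS, SimpleGraph.Walk.end_mem_support _⟩) hx1b.symm
          · exact Or.inr rfl
  · refine edge_not_mem_append Pl.1 (d12.reverse.append W2'.reverse) hlPl ?_ ?_ ?_
    · intro hgv
      apply hcT
      refine ⟨Pl, hPlS, ?_⟩
      rw [← hgv]
      exact SimpleGraph.Walk.mem_support_iff_exists_getVert.mpr ⟨1, rfl, by omega⟩
    · exact start_not_mem_tail_support Pl.2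
    · intro hmem
      rcases (SimpleGraph.Walk.mem_support_append_iff _ _).mp hmem with hxd | hxw2
      · rw [mem_reverse_support] at hxd
        exact had1 (hd12d1 a hxd)
      · rw [mem_reverse_support] at hxw2
        exact hx2a (hfirst2 a hxw2 ⟨P, hPS, SimpleGraph.Walk.start_mem_support _⟩).symm

/-- The master surgery lemma: if there is a family of at least two internally disjoint
`a`–`b` paths covering all neighbours of `b`, and `κ(b,c) ≥ 2`, then `κ(a,c) ≥ 2`. -/
lemma master_lemma (hab : a ≠ b) (hac : a ≠ c) (hbc : b ≠ c)
    (S : Finset (G.Path a b))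
    (hdisj : ∀ p ∈ S, ∀ q ∈ S, p ≠ q → ∀ x : V,
      x ∈ p.1.support → x ∈ q.1.support → x = a ∨ x = b)
    (hScard : 2 ≤ S.card)
    (hcovB : ∀ y, G.Adj b y → ∃ p ∈ S, y ∈ p.1.support)
    (h2bc : 2 ≤ localConn G b c) :
    2 ≤ localConn G a c := by
  classical
  by_cases hcT : ∃ p ∈ S, c ∈ p.1.support
  · -- `c` lies on the family: direct construction
    obtain ⟨P, hPS, hcP⟩ := hcT
    obtain ⟨P', hP'S, hP'ne⟩ := Finset.exists_mem_ne (show 1 < S.card by omega) P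
    set t := P.1.takeUntil c hcP with htdef
    set d := P.1.dropUntil c hcP with hddef
    have hcP' : c ∉ P'.1.support := by
      intro hmem
      rcases hdisj P' hP'S P hPS hP'ne c hmem hcP with rfl | rfl
      · exact hac rfl
      · exact hbc rfl
    refine two_le_localConn_of_walks hac t (P'.1.append d.reverse) ?_ ?_
    · intro x hxt hxB
      rcases (SimpleGraph.Walk.mem_support_append_iff _ _).mp hxB with hxP' | hxd
      · have hxP := SimpleGraph.Walk.support_takeUntil_subset _ _ hxt
        rcases hdisj P hPS P' hP'S (Ne.symm hP'ne) x hxP hxP' with rfl | rfl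
        · exact Or.inl rfl
        · exact absurd hxt (end_not_mem_takeUntil P.1 P.2 hcP (Ne.symm hbc))
      · rw [mem_reverse_support] at hxd
        exact Or.inr (takeUntil_inter P.1 P.2 hcP x hxt hxd)
    · refine edge_not_mem_append P'.1 d.reverse
        (SimpleGraph.Walk.not_nil_iff_lt_length.mp (SimpleGraph.Walk.not_nil_of_ne hab)) ?_ ?_ ?_
      · intro hgv
        apply hcP'
        rw [← hgv]
        have hl : 0 < P'.1.length :=
          SimpleGraph.Walk.not_nil_iff_lt_length.mp (SimpleGraph.Walk.not_nil_of_ne hab)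
        exact SimpleGraph.Walk.mem_support_iff_exists_getVert.mpr ⟨1, rfl, by omega⟩
      · exact start_not_mem_tail_support P'.2
      · rw [mem_reverse_support]
        exact start_not_mem_dropUntil P.1 P.2 hcP (Ne.symm hac)
  · -- `c` off the family: use the two `b`–`c` paths
    obtain ⟨Qs, hQdisj, hQcard⟩ := localConn_mem_famSet G hbc
    have hQ2 : 2 ≤ Qs.card := by
      rw [← hQcard] at h2bc
      exact_mod_cast h2bc
    obtain ⟨q1, q2, hq1, hq2, hq12⟩ := Finset.one_lt_card_iff.mp (show 1 < Qs.card by omega)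
    have hQ : ∀ x : V, x ∈ q1.1.support → x ∈ q2.1.support → x = b ∨ x = c :=
      hQdisj q1 hq1 q2 hq2 hq12
    have hbT : ∃ p ∈ S, b ∈ p.1.support := by
      obtain ⟨p0, hp0⟩ := Finset.card_pos.mp (show 0 < S.card by omega)
      exact ⟨p0, hp0, SimpleGraph.Walk.end_mem_support _⟩
    obtain ⟨x1, hx1T, W1', hsub1, hfirst1⟩ :=
      exists_firstHit q1.1.reverse {x : V | ∃ p ∈ S, x ∈ p.1.support} hbT
    obtain ⟨x2, hx2T, W2', hsub2, hfirst2⟩ :=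
      exists_firstHit q2.1.reverse {x : V | ∃ p ∈ S, x ∈ p.1.support} hbT
    have h1Q : ∀ y ∈ W1'.support, y ∈ q1.1.support :=
      fun y hy => (mem_reverse_support _ _).mp (hsub1 y hy)
    have h2Q : ∀ y ∈ W2'.support, y ∈ q2.1.support :=
      fun y hy => (mem_reverse_support _ _).mp (hsub2 y hy)
    have hW12 : ∀ y, y ∈ W1'.support → y ∈ W2'.support → y = b ∨ y = c :=
      fun y hy1 hy2 => hQ y (h1Q y hy1) (h2Q y hy2)
    have hW21 : ∀ y, y ∈ W2'.support → y ∈ W1'.support → y = b ∨ y = c :=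
      fun y hy2 hy1 => hQ y (h1Q y hy1) (h2Q y hy2)
    have hx1b : x1 ≠ b := by
      rintro rfl
      have hnn : ¬ W1'.reverse.Nil := SimpleGraph.Walk.not_nil_of_ne hbc
      have hadj := SimpleGraph.Walk.adj_snd hnn
      have hlen := SimpleGraph.Walk.not_nil_iff_lt_length.mp hnn
      have hyW : W1'.reverse.getVert 1 ∈ W1'.support := by
        rw [← mem_reverse_support]
        exact SimpleGraph.Walk.mem_support_iff_exists_getVert.mpr ⟨1, rfl, by
          rw [SimpleGraph.Walk.length_reverse] at hlen ⊢
          omega⟩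
      have := hfirst1 _ hyW (hcovB _ hadj)
      exact G.ne_of_adj hadj this.symm
    have hx2b : x2 ≠ b := by
      rintro rfl
      have hnn : ¬ W2'.reverse.Nil := SimpleGraph.Walk.not_nil_of_ne hbc
      have hadj := SimpleGraph.Walk.adj_snd hnn
      have hlen := SimpleGraph.Walk.not_nil_iff_lt_length.mp hnn
      have hyW : W2'.reverse.getVert 1 ∈ W2'.support := by
        rw [← mem_reverse_support]
        exact SimpleGraph.Walk.mem_support_iff_exists_getVert.mpr ⟨1, rfl, by
          rw [SimpleGraph.Walk.length_reverse] at hlen ⊢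
          omega⟩
      have := hfirst2 _ hyW (hcovB _ hadj)
      exact G.ne_of_adj hadj this.symm
    have hx12 : x1 ≠ x2 := by
      rintro rfl
      have m1 : x1 ∈ q1.1.support := h1Q x1 (SimpleGraph.Walk.end_mem_support _)
      have m2 : x1 ∈ q2.1.support := h2Q x1 (SimpleGraph.Walk.end_mem_support _)
      rcases hQ x1 m1 m2 with rfl | rfl
      · exact hx1b rfl
      · exact hcT hx1T
    by_cases hx1a : x1 = a
    · subst hx1a
      obtain ⟨Pj, hPjS, hx2Pj⟩ := hx2T
      exact master_auxA hdisj hab hac hcT (Ne.symm hx12) hPjS hx2Pj W1' W2'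
        hfirst1 hfirst2 hW12
    · by_cases hx2a : x2 = a
      · subst hx2a
        obtain ⟨Pj, hPjS, hx1Pj⟩ := hx1T
        exact master_auxA hdisj hab hac hcT hx1a hPjS hx1Pj W2' W1'
          hfirst2 hfirst1 hW21
      · obtain ⟨Pi, hPiS, hx1Pi⟩ := hx1T
        obtain ⟨Pj, hPjS, hx2Pj⟩ := hx2T
        by_cases hPij : Pi = Pj
        · subst hPij
          obtain ⟨Pl, hPlS, hPlne⟩ := Finset.exists_mem_ne (show 1 < S.card by omega) Pi
          rcases mem_dropUntil_or Pi.1 Pi.2 hx1Pi hx2Pj with hord | hord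
          · exact master_auxC hdisj hab hac hcT hx1a hx2a hx1b hx2b hx12 hPiS hPlS
              (Ne.symm hPlne) hx1Pi hord W1' W2' hfirst1 hfirst2 hW12
          · exact master_auxC hdisj hab hac hcT hx2a hx1a hx2b hx1b (Ne.symm hx12) hPiS hPlS
              (Ne.symm hPlne) hx2Pj hord W2' W1' hfirst2 hfirst1 hW21
        · exact master_auxB hdisj hab hac hcT hx1a hx2a hx1b hx2b hPiS hPjS hPij
            hx1Pi hx2Pj W1' W2' hfirst1 hfirst2 hW12

end MasterLemma

section Systems

/-- An internal vertex of a member of an internally disjoint family with at least two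
members is 2-connected to the far endpoint. -/
lemma two_le_localConn_of_internal [DecidableEq V] {S : Finset (G.Path a b)} (hab : a ≠ b)
    (hdisj : ∀ p ∈ S, ∀ q ∈ S, p ≠ q → ∀ x : V,
      x ∈ p.1.support → x ∈ q.1.support → x = a ∨ x = b)
    (hScard : 2 ≤ S.card)
    {P : G.Path a b} (hPS : P ∈ S) {x : V} (hxP : x ∈ P.1.support)
    (hxa : x ≠ a) (hxb : x ≠ b) :
    2 ≤ localConn G x b := by
  classical
  obtain ⟨Q, hQS, hQne⟩ := Finset.exists_mem_ne (show 1 < S.card by omega) P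
  set t := P.1.takeUntil x hxP with htdef
  set d := P.1.dropUntil x hxP with hddef
  have htpath : t.IsPath := P.2.takeUntil hxP
  have hxQ : x ∉ Q.1.support := by
    intro hmem
    rcases hdisj P hPS Q hQS (Ne.symm hQne) x hxP hmem with rfl | rfl
    · exact hxa rfl
    · exact hxb rfl
  have hl : 0 < t.reverse.length := by
    rw [SimpleGraph.Walk.length_reverse]
    exact SimpleGraph.Walk.not_nil_iff_lt_length.mp
      (SimpleGraph.Walk.not_nil_of_ne (fun h => hxa h.symm))
  refine two_le_localConn_of_walks hxb d (t.reverse.append Q.1) ?_ ?_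
  · intro y hyd hyB
    rcases (SimpleGraph.Walk.mem_support_append_iff _ _).mp hyB with hyt | hyQ
    · rw [mem_reverse_support] at hyt
      exact Or.inl (takeUntil_inter P.1 P.2 hxP y hyt hyd)
    · have hyP := SimpleGraph.Walk.support_dropUntil_subset _ _ hyd
      rcases hdisj P hPS Q hQS (Ne.symm hQne) y hyP hyQ with rfl | rfl
      · exact absurd hyd (start_not_mem_dropUntil P.1 P.2 hxP hxa)
      · exact Or.inr rfl
  · refine edge_not_mem_append t.reverse Q.1 hl ?_ ?_ ?_
    · intro hgv
      have hmem : t.reverse.getVert 1 ∈ t.support := by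
        rw [← mem_reverse_support]
        exact SimpleGraph.Walk.mem_support_iff_exists_getVert.mpr ⟨1, rfl, by omega⟩
      rw [hgv] at hmem
      exact end_not_mem_takeUntil P.1 P.2 hxP hxb hmem
    · exact start_not_mem_tail_support htpath.reverse
    · exact hxQ

/-- From `κ(a,b) = Δ ≥ deg b` we get an internally disjoint family of size `Δ`
covering all neighbours of `b`. -/
lemma exists_covering_system [DecidableRel G.Adj] (hab : a ≠ b) {Δ : ℕ}
    (hκ : localConn G a b = (Δ : ℕ∞)) (hdegb : G.degree b ≤ Δ) :
    ∃ S : Finset (G.Path a b),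
      (∀ p ∈ S, ∀ q ∈ S, p ≠ q → ∀ x : V,
        x ∈ p.1.support → x ∈ q.1.support → x = a ∨ x = b) ∧
      S.card = Δ ∧ (∀ y, G.Adj b y → ∃ p ∈ S, y ∈ p.1.support) := by
  classical
  obtain ⟨S, hdisj, hcard⟩ := localConn_mem_famSet G hab
  rw [hκ] at hcard
  have hScard : S.card = Δ := by exact_mod_cast hcard
  refine ⟨S, hdisj, hScard, ?_⟩
  have hba : b ≠ a := Ne.symm hab
  set f : G.Path a b → V := fun p => p.1.reverse.getVert 1 with hfdef
  have hmaps : ∀ p ∈ S, f p ∈ G.neighborFinset b := by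
    intro p _
    rw [SimpleGraph.mem_neighborFinset]
    exact SimpleGraph.Walk.adj_snd (SimpleGraph.Walk.not_nil_of_ne hba)
  have hinj : Set.InjOn f S := by
    intro p hp q hq heq
    by_contra hne
    have hlp : 0 < p.1.reverse.length := SimpleGraph.Walk.not_nil_iff_lt_length.mp
      (SimpleGraph.Walk.not_nil_of_ne hba)
    have hlq : 0 < q.1.reverse.length := SimpleGraph.Walk.not_nil_iff_lt_length.mp
      (SimpleGraph.Walk.not_nil_of_ne hba)
    have hxp : f p ∈ p.1.support := by
      rw [← mem_reverse_support]
      exact SimpleGraph.Walk.mem_support_iff_exists_getVert.mpr ⟨1, rfl, by omega⟩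
    have hxq : f p ∈ q.1.support := by
      rw [← mem_reverse_support, heq]
      exact SimpleGraph.Walk.mem_support_iff_exists_getVert.mpr ⟨1, rfl, by omega⟩
    rcases hdisj p hp q hq hne (f p) hxp hxq with hxa | hxb
    · have hp1 : p.1.reverse.getVert 1 = a := hxa
      have hq1 : q.1.reverse.getVert 1 = a := by
        show f q = a
        rw [← heq]; exact hxa
      obtain ⟨h1, he1⟩ := path_eq_edge p.2.reverse hba hp1
      obtain ⟨h2, he2⟩ := path_eq_edge q.2.reverse hba hq1
      have : p.1.reverse = q.1.reverse := he1.trans he2.symm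
      exact hne (Subtype.ext (SimpleGraph.Walk.reverse_injective this))
    · have hadj : G.Adj b (f p) := SimpleGraph.Walk.adj_snd
        (SimpleGraph.Walk.not_nil_of_ne (p := p.1.reverse) hba)
      rw [hxb] at hadj
      exact G.irrefl hadj
  have himg : S.image f = G.neighborFinset b := by
    apply Finset.eq_of_subset_of_card_le
    · intro y hy
      obtain ⟨p, hp, rfl⟩ := Finset.mem_image.mp hy
      exact hmaps p hp
    · rw [Finset.card_image_of_injOn hinj, hScard, SimpleGraph.card_neighborFinset_eq_degree]
      exact hdegb
  intro y hy
  have : y ∈ S.image f := by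
    rw [himg, SimpleGraph.mem_neighborFinset]
    exact hy
  obtain ⟨p, hp, rfl⟩ := Finset.mem_image.mp this
  refine ⟨p, hp, ?_⟩
  rw [← mem_reverse_support]
  have hlp : 0 < p.1.reverse.length := SimpleGraph.Walk.not_nil_iff_lt_length.mp
    (SimpleGraph.Walk.not_nil_of_ne hba)
  exact SimpleGraph.Walk.mem_support_iff_exists_getVert.mpr ⟨1, rfl, by omega⟩

end Systems

section Counting

variable [DecidableRel G.Adj]

lemma localConn_le_maxDegree (hab : a ≠ b) : localConn G a b ≤ (G.maxDegree : ℕ∞) :=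
  le_trans (localConn_le_degree G hab) (by exact_mod_cast G.degree_le_maxDegree a)

lemma localConn_pos_facts {v w : V} (hvw : v ≠ w)
    (hreach : G.Reachable v w) :
    localConn G v w = ((localConn G v w).toNat : ℕ∞) ∧
      1 ≤ (localConn G v w).toNat ∧ (localConn G v w).toNat ≤ G.maxDegree := by
  have hne := localConn_ne_top G hvw
  have h1 : 1 ≤ localConn G v w := one_le_localConn_of_reachable G hreach hvw
  have h2 : localConn G v w ≤ (G.maxDegree : ℕ∞) := localConn_le_maxDegree hvw
  refine ⟨(ENat.coe_toNat hne).symm, ?_, ?_⟩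
  · rw [← ENat.coe_toNat hne] at h1
    exact_mod_cast h1
  · rw [← ENat.coe_toNat hne] at h2
    exact_mod_cast h2

open Finset in
/-- Per-class bound: a reachability class meeting `B` in `s` vertices contains at most
`Δ^s - 1` vertices outside `B`. -/
lemma class_bound [DecidableEq V] [DecidableEq G.ConnectedComponent]
    (hΔ : 2 ≤ G.maxDegree) (B : Finset V)
    (hres : ∀ u v : V, (∀ w ∈ B, localConn G u w = localConn G v w) → u = v)
    (K : G.ConnectedComponent)
    (hK : (B.filter (fun w => G.connectedComponentMk w = K)).Nonempty) :
    ((Finset.univ \ B).filter (fun v => G.connectedComponentMk v = K)).card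
      ≤ G.maxDegree ^ (B.filter (fun w => G.connectedComponentMk w = K)).card - 1 := by
  classical
  set Δ := G.maxDegree with hΔdef
  set BK := B.filter (fun w => G.connectedComponentMk w = K) with hBKdef
  set PK := (Finset.univ \ B).filter (fun v => G.connectedComponentMk v = K) with hPKdef
  have hmemBK : ∀ w ∈ BK, w ∈ B ∧ G.connectedComponentMk w = K :=
    fun w hw => Finset.mem_filter.mp hw
  have hmemPK : ∀ v ∈ PK, v ∉ B ∧ G.connectedComponentMk v = K := by
    intro v hv
    have := Finset.mem_filter.mp hv
    exact ⟨(Finset.mem_sdiff.mp this.1).2, this.2⟩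
  have hneBP : ∀ v ∈ PK, ∀ w ∈ BK, v ≠ w := by
    intro v hv w hw h
    rw [h] at hv
    exact (hmemPK w hv).1 (hmemBK w hw).1
  have hreach : ∀ v ∈ PK, ∀ w ∈ BK, G.Reachable v w := by
    intro v hv w hw
    exact SimpleGraph.ConnectedComponent.exact
      ((hmemPK v hv).2.trans (hmemBK w hw).2.symm)
  by_contra hcon
  push_neg at hcon
  have hΔpos : 0 < Δ := by omega
  have hPKcard : Δ ^ BK.card ≤ PK.card := by
    have : 1 ≤ Δ ^ BK.card := Nat.one_le_pow _ _ hΔpos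
    omega
  -- the pattern map
  set Φ : V → (↥BK → Fin Δ) := fun v w =>
    ⟨min ((localConn G v w.1).toNat - 1) (Δ - 1), by omega⟩ with hΦdef
  have hΦval : ∀ v ∈ PK, ∀ w : ↥BK,
      (Φ v w : ℕ) = (localConn G v w.1).toNat - 1 := by
    intro v hv w
    have hf := localConn_pos_facts (hneBP v hv w.1 w.2) (hreach v hv w.1 w.2)
    show min ((localConn G v w.1).toNat - 1) (Δ - 1) = (localConn G v w.1).toNat - 1
    have := hf.2.2
    omega
  have hκeq : ∀ v ∈ PK, ∀ w : ↥BK,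
      localConn G v w.1 = (((Φ v w : ℕ) + 1 : ℕ) : ℕ∞) := by
    intro v hv w
    have hf := localConn_pos_facts (hneBP v hv w.1 w.2) (hreach v hv w.1 w.2)
    rw [hΦval v hv w]
    have h1 := hf.2.1
    have : (localConn G v w.1).toNat - 1 + 1 = (localConn G v w.1).toNat := by omega
    rw [this]
    exact hf.1
  have hinj : Set.InjOn Φ PK := by
    intro u hu v hv heq
    apply hres
    intro w hw
    by_cases hwK : G.connectedComponentMk w = K
    · have hwBK : w ∈ BK := Finset.mem_filter.mpr ⟨hw, hwK⟩
      have h1 := hκeq u hu ⟨w, hwBK⟩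
      have h2 := hκeq v hv ⟨w, hwBK⟩
      rw [h1, h2, heq]
    · have h1 : ¬ G.Reachable u w := by
        intro hr
        exact hwK ((SimpleGraph.ConnectedComponent.sound hr).symm.trans (hmemPK u hu).2)
      have h2 : ¬ G.Reachable v w := by
        intro hr
        exact hwK ((SimpleGraph.ConnectedComponent.sound hr).symm.trans (hmemPK v hv).2)
      rw [localConn_eq_zero_of_not_reachable G h1, localConn_eq_zero_of_not_reachable G h2]
  have hcardF : Fintype.card (↥BK → Fin Δ) = Δ ^ BK.card := by
    rw [Fintype.card_fun, Fintype.card_fin, Fintype.card_coe]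
  have hPKeq : PK.card = Δ ^ BK.card := by
    have h1 : (PK.image Φ).card = PK.card := Finset.card_image_of_injOn hinj
    have h2 : (PK.image Φ).card ≤ Fintype.card (↥BK → Fin Δ) :=
      le_trans (Finset.card_le_card (Finset.subset_univ _)) (by rw [Finset.card_univ])
    omega
  have himg : PK.image Φ = Finset.univ := by
    apply Finset.eq_univ_of_card
    rw [Finset.card_image_of_injOn hinj, hPKeq, hcardF]
  have hpattern : ∀ g : ↥BK → Fin Δ, ∃ v ∈ PK,
      ∀ w : ↥BK, localConn G v w.1 = (((g w : ℕ) + 1 : ℕ) : ℕ∞) := by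
    intro g
    have : g ∈ PK.image Φ := himg ▸ Finset.mem_univ g
    obtain ⟨v, hv, rfl⟩ := Finset.mem_image.mp this
    exact ⟨v, hv, fun w => hκeq v hv w⟩
  obtain ⟨w1, hw1⟩ := hK
  rcases eq_or_lt_of_le (show 1 ≤ BK.card from Finset.card_pos.mpr ⟨w1, hw1⟩) with hs1 | hs2
  · -- single basis vertex in the class
    have hBKone : BK = {w1} := by
      symm
      apply Finset.eq_of_subset_of_card_le
      · intro x hx
        rw [Finset.mem_singleton] at hx
        exact hx ▸ hw1
      · rw [Finset.card_singleton, ← hs1]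
    -- the two special vertices
    obtain ⟨vD, hvD, hvDκ⟩ := hpattern (fun _ => ⟨Δ - 1, by omega⟩)
    obtain ⟨v1, hv1, hv1κ⟩ := hpattern (fun _ => ⟨0, by omega⟩)
    have hvDw1 : localConn G vD w1 = (Δ : ℕ∞) := by
      have := hvDκ ⟨w1, hw1⟩
      rw [this]
      congr 1
      show Δ - 1 + 1 = Δ
      omega
    have hv1w1 : localConn G v1 w1 = (1 : ℕ∞) := by
      have := hv1κ ⟨w1, hw1⟩
      rw [this]
      show (((0 : ℕ) + 1 : ℕ) : ℕ∞) = 1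
      norm_num
    have hv1vD : v1 ≠ vD := by
      rintro rfl
      rw [hvDw1] at hv1w1
      have : Δ = 1 := by exact_mod_cast hv1w1
      omega
    have hvDne : vD ≠ w1 := hneBP vD hvD w1 hw1
    have hv1ne : v1 ≠ w1 := hneBP v1 hv1 w1 hw1
    obtain ⟨S, hdisj, hScard, _⟩ :=
      exists_covering_system hvDne hvDw1 (G.degree_le_maxDegree w1)
    -- pigeonhole: every class vertex other than `vD, w1` is internal to the family
    set KF := Finset.univ.filter (fun v => G.connectedComponentMk v = K) with hKFdef
    have hKFsplit : KF = BK ∪ PK := by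
      ext x
      simp only [hKFdef, hBKdef, hPKdef, Finset.mem_filter, Finset.mem_union,
        Finset.mem_sdiff, Finset.mem_univ, true_and]
      by_cases hx : x ∈ B <;> tauto
    have hdisjBP : Disjoint BK PK := by
      refine Finset.disjoint_left.mpr ?_
      intro x hx1 hx2
      exact (hmemPK x hx2).1 (hmemBK x hx1).1
    have hKFcard : KF.card = BK.card + PK.card := by
      rw [hKFsplit, Finset.card_union_of_disjoint hdisjBP]
    have hPKΔ : PK.card = Δ := by rw [hPKeq, ← hs1, pow_one]
    have hvDKF : vD ∈ KF := Finset.mem_filter.mpr ⟨Finset.mem_univ _, (hmemPK vD hvD).2⟩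
    have hw1KF : w1 ∈ KF := Finset.mem_filter.mpr ⟨Finset.mem_univ _, (hmemBK w1 hw1).2⟩
    set R := KF \ {vD, w1} with hRdef
    have hsubR : ({vD, w1} : Finset V) ⊆ KF := by
      intro x hx
      rcases Finset.mem_insert.mp hx with rfl | hx
      · exact hvDKF
      · rw [Finset.mem_singleton] at hx
        subst hx
        exact hw1KF
    have hRcard : R.card = Δ - 1 := by
      rw [hRdef, Finset.card_sdiff_of_subset hsubR, Finset.card_pair hvDne, hKFcard, ← hs1, hPKΔ]
      omega
    set I : G.Path vD w1 → Finset V := fun p => p.1.support.toFinset \ {vD, w1} with hIdef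
    have hIsub : ∀ p ∈ S, I p ⊆ R := by
      intro p hp y hy
      rw [hIdef, Finset.mem_sdiff] at hy
      rw [hRdef, Finset.mem_sdiff]
      refine ⟨?_, hy.2⟩
      have hysup : y ∈ p.1.support := List.mem_toFinset.mp hy.1
      have hreachy : G.Reachable y w1 := ⟨p.1.dropUntil y hysup⟩
      refine Finset.mem_filter.mpr ⟨Finset.mem_univ _, ?_⟩
      exact (SimpleGraph.ConnectedComponent.sound hreachy).trans (hmemBK w1 hw1).2
    have hIdisj : ∀ p ∈ S, ∀ q ∈ S, p ≠ q → Disjoint (I p) (I q) := by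
      intro p hp q hq hne
      refine Finset.disjoint_left.mpr ?_
      intro y hy1 hy2
      rw [hIdef, Finset.mem_sdiff] at hy1 hy2
      have := hdisj p hp q hq hne y (List.mem_toFinset.mp hy1.1) (List.mem_toFinset.mp hy2.1)
      rcases this with rfl | rfl
      · exact hy1.2 (by simp)
      · exact hy1.2 (by simp)
    have hS0 : (S.filter (fun p => I p = ∅)).card ≤ 1 := by
      rw [Finset.card_le_one]
      intro p hp q hq
      rw [Finset.mem_filter] at hp hq
      have hedge : ∀ r : G.Path vD w1, I r = ∅ →
          ∃ h : G.Adj vD w1, r.1 = SimpleGraph.Walk.cons h SimpleGraph.Walk.nil := by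
        intro r hrI
        rw [hIdef] at hrI
        have hsubr := Finset.sdiff_eq_empty_iff_subset.mp hrI
        have hsub : ∀ y ∈ r.1.support, y = vD ∨ y = w1 := by
          intro y hy
          have := hsubr (List.mem_toFinset.mpr hy)
          rcases Finset.mem_insert.mp this with h | h
          · exact Or.inl h
          · exact Or.inr (Finset.mem_singleton.mp h)
        have hlen : r.1.length ≤ 1 := support_length_le_two r.1 r.2 hsub
        have hpos : 0 < r.1.length := SimpleGraph.Walk.not_nil_iff_lt_length.mp
          (SimpleGraph.Walk.not_nil_of_ne hvDne)
        have h1 : r.1.getVert 1 = w1 := by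
          rw [show (1 : ℕ) = r.1.length by omega]
          exact SimpleGraph.Walk.getVert_length _
        exact path_eq_edge r.2 hvDne h1
      obtain ⟨h1, he1⟩ := hedge p hp.2
      obtain ⟨h2, he2⟩ := hedge q hq.2
      exact Subtype.ext (he1.trans he2.symm)
    have hsum : Δ - 1 ≤ ∑ p ∈ S, (I p).card := by
      have h1 : ∀ p ∈ S \ S.filter (fun p => I p = ∅), 1 ≤ (I p).card := by
        intro p hp
        rw [Finset.mem_sdiff, Finset.mem_filter] at hp
        have hne : I p ≠ ∅ := fun h => hp.2 ⟨hp.1, h⟩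
        exact Finset.card_pos.mpr (Finset.nonempty_iff_ne_empty.mpr hne)
      calc Δ - 1 ≤ (S \ S.filter (fun p => I p = ∅)).card := by
            rw [Finset.card_sdiff_of_subset (Finset.filter_subset _ _)]
            omega
        _ ≤ ∑ p ∈ S \ S.filter (fun p => I p = ∅), (I p).card := by
            simpa using Finset.card_nsmul_le_sum _ _ 1 h1
        _ ≤ ∑ p ∈ S, (I p).card :=
            Finset.sum_le_sum_of_subset Finset.sdiff_subset
    have hbig : S.biUnion I = R := by
      apply Finset.eq_of_subset_of_card_le (Finset.biUnion_subset.mpr hIsub)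
      rw [Finset.card_biUnion hIdisj, hRcard]
      exact hsum
    have hv1R : v1 ∈ R := by
      rw [hRdef, Finset.mem_sdiff]
      refine ⟨Finset.mem_filter.mpr ⟨Finset.mem_univ _, (hmemPK v1 hv1).2⟩, ?_⟩
      intro hmem
      rcases Finset.mem_insert.mp hmem with h | h
      · exact hv1vD h
      · exact hv1ne (Finset.mem_singleton.mp h)
    rw [← hbig] at hv1R
    obtain ⟨p, hpS, hv1Ip⟩ := Finset.mem_biUnion.mp hv1R
    rw [hIdef, Finset.mem_sdiff] at hv1Ip
    have hv1sup : v1 ∈ p.1.support := List.mem_toFinset.mp hv1Ip.1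
    have h2 := two_le_localConn_of_internal hvDne hdisj
      (by rw [hScard]; exact hΔ) hpS hv1sup hv1vD hv1ne
    rw [hv1w1] at h2
    have : (2 : ℕ) ≤ 1 := by exact_mod_cast h2
    omega
  · -- at least two basis vertices in the class
    obtain ⟨w2, hw2, hw21⟩ := Finset.exists_mem_ne hs2 w1
    have hw12 : w1 ≠ w2 := Ne.symm hw21
    by_cases h12 : 2 ≤ localConn G w1 w2
    · obtain ⟨v, hvPK, hvκ⟩ := hpattern
        (fun w => if w.1 = w1 then ⟨Δ - 1, by omega⟩ else ⟨0, by omega⟩)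
      have hv1 : localConn G v w1 = (Δ : ℕ∞) := by
        have h := hvκ ⟨w1, hw1⟩
        rw [if_pos rfl] at h
        rw [h]
        congr 1
        show Δ - 1 + 1 = Δ
        omega
      have hv2 : localConn G v w2 = 1 := by
        have h := hvκ ⟨w2, hw2⟩
        rw [if_neg hw21] at h
        rw [h]
        show (((0 : ℕ) + 1 : ℕ) : ℕ∞) = 1
        norm_num
      have hvw1 : v ≠ w1 := hneBP v hvPK w1 hw1
      have hvw2 : v ≠ w2 := hneBP v hvPK w2 hw2
      obtain ⟨S, hdisj', hScard, hcov⟩ :=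
        exists_covering_system hvw1 hv1 (G.degree_le_maxDegree w1)
      have h2ac := master_lemma hvw1 hvw2 hw12 S hdisj'
        (by rw [hScard]; exact hΔ) hcov h12
      rw [hv2] at h2ac
      have : (2 : ℕ) ≤ 1 := by exact_mod_cast h2ac
      omega
    · obtain ⟨v, hvPK, hvκ⟩ := hpattern (fun _ => ⟨Δ - 1, by omega⟩)
      have hvΔ : ∀ w : ↥BK, localConn G v w.1 = (Δ : ℕ∞) := by
        intro w
        have h := hvκ w
        rw [h]
        congr 1
        show Δ - 1 + 1 = Δ
        omega
      have hvw1 : v ≠ w1 := hneBP v hvPK w1 hw1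
      have hvw2 : v ≠ w2 := hneBP v hvPK w2 hw2
      have hκsymm : localConn G w1 v = (Δ : ℕ∞) := by
        rw [localConn_symm]
        exact hvΔ ⟨w1, hw1⟩
      obtain ⟨S, hdisj', hScard, hcov⟩ :=
        exists_covering_system (Ne.symm hvw1) hκsymm (G.degree_le_maxDegree v)
      have h2bc : 2 ≤ localConn G v w2 := by
        rw [hvΔ ⟨w2, hw2⟩]
        exact_mod_cast hΔ
      have := master_lemma (Ne.symm hvw1) hw12 hvw2 S hdisj'
        (by rw [hScard]; exact hΔ) hcov h2bc
      exact h12 this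

lemma sum_pow_sub_one_le {Δ : ℕ} (hΔ : 2 ≤ Δ) {ι : Type*} [DecidableEq ι]
    (t : Finset ι) (f : ι → ℕ) (hf : ∀ K ∈ t, 1 ≤ f K) :
    ∑ K ∈ t, (Δ ^ f K - 1) ≤ Δ ^ (∑ K ∈ t, f K) - 1 := by
  classical
  induction t using Finset.induction_on with
  | empty => simp
  | @insert x s hx ih =>
    rw [Finset.sum_insert hx, Finset.sum_insert hx]
    have h1 : 1 ≤ f x := hf x (Finset.mem_insert_self _ _)
    have ih' := ih (fun K hK => hf K (Finset.mem_insert_of_mem hK))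
    have hA : 1 ≤ Δ ^ f x := Nat.one_le_pow _ _ (by omega)
    have hB : 1 ≤ Δ ^ (∑ K ∈ s, f K) := Nat.one_le_pow _ _ (by omega)
    have hpow : Δ ^ (f x + ∑ K ∈ s, f K) = Δ ^ f x * Δ ^ (∑ K ∈ s, f K) := pow_add _ _ _
    have key : Δ ^ f x + Δ ^ (∑ K ∈ s, f K) ≤ Δ ^ f x * Δ ^ (∑ K ∈ s, f K) + 1 := by
      nlinarith
    rw [← hpow] at key
    omega

open Finset in
/-- The main counting bound. -/
lemma main_count [DecidableEq V] [DecidableEq G.ConnectedComponent]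
    (hΔ : 2 ≤ G.maxDegree) (B : Finset V)
    (hres : ∀ u v : V, (∀ w ∈ B, localConn G u w = localConn G v w) → u = v) :
    Fintype.card V ≤ B.card + G.maxDegree ^ B.card := by
  classical
  set Δ := G.maxDegree with hΔdef
  rcases Finset.eq_empty_or_nonempty B with hBe | hBne
  · have hall : ∀ u v : V, u = v := fun u v => hres u v (by simp [hBe])
    have hcard : Fintype.card V ≤ 1 := Fintype.card_le_one_iff.mpr hall
    have : 1 ≤ B.card + Δ ^ B.card := by
      have := Nat.one_le_pow B.card Δ (by omega)
      omega
    omega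
  set comp : V → G.ConnectedComponent := G.connectedComponentMk with hcompdef
  set good : Finset G.ConnectedComponent := B.image comp with hgooddef
  have hsplit : (Finset.univ \ B).card =
      ((Finset.univ \ B).filter (fun v => comp v ∈ good)).card +
      ((Finset.univ \ B).filter (fun v => ¬ comp v ∈ good)).card :=
    (Finset.card_filter_add_card_filter_not _).symm
  have hbad : ((Finset.univ \ B).filter (fun v => ¬ comp v ∈ good)).card ≤ 1 := by
    rw [Finset.card_le_one]
    intro u hu v hv
    rw [Finset.mem_filter] at hu hv
    apply hres
    intro w hw
    have hur : ¬ G.Reachable u w := fun hr =>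
      hu.2 (Finset.mem_image.mpr ⟨w, hw, (SimpleGraph.ConnectedComponent.sound hr).symm⟩)
    have hvr : ¬ G.Reachable v w := fun hr =>
      hv.2 (Finset.mem_image.mpr ⟨w, hw, (SimpleGraph.ConnectedComponent.sound hr).symm⟩)
    rw [localConn_eq_zero_of_not_reachable G hur, localConn_eq_zero_of_not_reachable G hvr]
  have hfib : ((Finset.univ \ B).filter (fun v => comp v ∈ good)).card =
      ∑ K ∈ good, ((Finset.univ \ B).filter (fun v => comp v = K)).card := by
    rw [Finset.card_eq_sum_card_fiberwise
      (f := comp) (t := good) (s := (Finset.univ \ B).filter (fun v => comp v ∈ good))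
        (fun x hx => (Finset.mem_filter.mp (Finset.mem_coe.mp hx)).2)]
    refine Finset.sum_congr rfl ?_
    intro K hK
    congr 1
    ext v
    simp only [Finset.mem_filter]
    constructor
    · rintro ⟨⟨hv, _⟩, hvK⟩
      exact ⟨hv, hvK⟩
    · rintro ⟨hv, hvK⟩
      exact ⟨⟨hv, hvK ▸ hK⟩, hvK⟩
  have hclass : ∀ K ∈ good, ((Finset.univ \ B).filter (fun v => comp v = K)).card ≤
      Δ ^ ((B.filter (fun w => comp w = K)).card) - 1 := by
    intro K hK
    obtain ⟨w, hw, hwK⟩ := Finset.mem_image.mp hK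
    exact class_bound hΔ B hres K ⟨w, Finset.mem_filter.mpr ⟨hw, hwK⟩⟩
  have hBsum : ∑ K ∈ good, (B.filter (fun w => comp w = K)).card = B.card :=
    (Finset.card_eq_sum_card_fiberwise (fun x hx => Finset.mem_image_of_mem comp hx)).symm
  have hs1 : ∀ K ∈ good, 1 ≤ (B.filter (fun w => comp w = K)).card := by
    intro K hK
    obtain ⟨w, hw, hwK⟩ := Finset.mem_image.mp hK
    exact Finset.card_pos.mpr ⟨w, Finset.mem_filter.mpr ⟨hw, hwK⟩⟩
  have harith : ∑ K ∈ good, (Δ ^ ((B.filter (fun w => comp w = K)).card) - 1) ≤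
      Δ ^ B.card - 1 := by
    rw [← hBsum]
    exact sum_pow_sub_one_le hΔ good _ hs1
  have hgoodsum : ((Finset.univ \ B).filter (fun v => comp v ∈ good)).card ≤ Δ ^ B.card - 1 := by
    rw [hfib]
    exact le_trans (Finset.sum_le_sum hclass) harith
  have hV : Fintype.card V = B.card + (Finset.univ \ B).card := by
    rw [Finset.card_sdiff_of_subset (Finset.subset_univ B), Finset.card_univ]
    have := Finset.card_le_card (Finset.subset_univ B)
    rw [Finset.card_univ] at this
    omega
  have hpow1 : 1 ≤ Δ ^ B.card := Nat.one_le_pow _ _ (by omega)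
  omega

end Counting

end Surgery

end Aux

/-- for a graph with maximum degree `Δ ≥ 2`,
`n ≤ cdim G + Δ ^ cdim G`, and consequently `log_Δ ((n+1)/2) ≤ cdim G`. -/
theorem stmt3 {V : Type*} [Fintype V] (G : SimpleGraph V) [DecidableRel G.Adj]
    (hΔ : 2 ≤ G.maxDegree) :
    Fintype.card V ≤ cdim G + G.maxDegree ^ cdim G ∧
    Real.logb (G.maxDegree : ℝ) (((Fintype.card V : ℝ) + 1) / 2) ≤ (cdim G : ℝ) := by
  classical
  have huniv : ConnResolving G Set.univ := by
    intro u v h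
    have h1 := h u (Set.mem_univ u)
    rw [localConn_self] at h1
    by_contra hne
    exact localConn_ne_top G (Ne.symm hne) h1.symm
  have hne : {n : ℕ | ∃ W : Set V, ConnResolving G W ∧ W.ncard = n}.Nonempty :=
    ⟨Set.univ.ncard, Set.univ, huniv, rfl⟩
  have hmem : cdim G ∈ {n : ℕ | ∃ W : Set V, ConnResolving G W ∧ W.ncard = n} := by
    rw [cdim]
    exact Nat.sInf_mem hne
  obtain ⟨W, hW, hWcard⟩ := hmem
  set B := W.toFinset with hB
  have hBcard : B.card = cdim G := by
    rw [hB, ← Set.ncard_eq_toFinset_card' W, hWcard]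
  have hres : ∀ u v : V, (∀ w ∈ B, localConn G u w = localConn G v w) → u = v := by
    intro u v h
    exact hW u v (fun w hw => h w (Set.mem_toFinset.mpr hw))
  have hmain := main_count hΔ B hres
  rw [hBcard] at hmain
  refine ⟨hmain, ?_⟩
  have h2p : cdim G < 2 ^ cdim G := Nat.lt_two_pow_self
  have hle : 2 ^ cdim G ≤ G.maxDegree ^ cdim G := Nat.pow_le_pow_left hΔ _
  have hn2 : Fintype.card V + 1 ≤ 2 * G.maxDegree ^ cdim G := by omega
  have hΔR : (1 : ℝ) < (G.maxDegree : ℝ) := by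
    exact_mod_cast (by omega : 1 < G.maxDegree)
  have hxpos : (0 : ℝ) < ((Fintype.card V : ℝ) + 1) / 2 := by positivity
  rw [Real.logb_le_iff_le_rpow hΔR hxpos, Real.rpow_natCast,
    div_le_iff₀ (by norm_num : (0 : ℝ) < 2)]
  have hcast : ((Fintype.card V + 1 : ℕ) : ℝ) ≤ ((2 * G.maxDegree ^ cdim G : ℕ) : ℝ) := by
    exact_mod_cast hn2
  push_cast at hcast ⊢
  linarith

end ConnDim
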